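/- Let p, q and p′, q′ be two pairs of relatively prime positive integers with (p,q) ≠ (p′,q′). Then the subshift generated by S(0,q/p) is not conjugate to the subshift generated by S(0,q′/p′), and likewise the subshift generated by S′(0,q/p) is not conjugate to the subshift generated by S′(0,q′/p′). -/

import Mathlib

open Classical

/-- The shift map `σ` on bi-infinite sequences: `σ(x)_i = x_{i+1}`. -/
def shiftMap {A : Type*} (x : ℤ → A) : ℤ → A := fun i => x (i + 1)

/-- The iterated shift `σ^k` for `k ∈ ℤ`: `σ^k(x)_i = x_{i+k}`. -/
def shiftZ {A : Type*} (k : ℤ) (x : ℤ → A) : ℤ → A := fun i => x (i + k)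

/-- `x` is periodic with period `N > 0`, i.e. `σ^N(x) = x`. -/
def IsPeriodicWith {A : Type*} (x : ℤ → A) (N : ℕ) : Prop :=
  0 < N ∧ ∀ i : ℤ, x (i + N) = x i

/-- `x` is periodic (with some period `N > 0`). -/
def IsPeriodicSeq {A : Type*} (x : ℤ → A) : Prop := ∃ N : ℕ, IsPeriodicWith x N

/-- The sequence `p(x;i,n)` obtained from `x` by removing the block `x_{i+1} ⋯ x_{i+n}`. -/
def removeBlock {A : Type*} (x : ℤ → A) (i : ℤ) (n : ℕ) : ℤ → A :=
  fun k => if k ≤ i then x k else x (k + n)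

/-- `(i,n)` is an anomaly occurrence of `x`: `n > 0` and `p(x;i,n)` is periodic. -/
def IsAnomalyOcc {A : Type*} (x : ℤ → A) (i : ℤ) (n : ℕ) : Prop :=
  0 < n ∧ IsPeriodicSeq (removeBlock x i n)

/-- `x` is eventually periodic: non-periodic, but removing some block leaves a periodic sequence. -/
def EventuallyPeriodic {A : Type*} (x : ℤ → A) : Prop :=
  ¬ IsPeriodicSeq x ∧ ∃ (i : ℤ) (n : ℕ), IsAnomalyOcc x i n

/-- The least period of an eventually periodic sequence `x`: the least period of
`p(x;i,n)` over anomaly occurrences `(i,n)` of `x`. -/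
noncomputable def evLeastPeriod {A : Type*} (x : ℤ → A) : ℕ :=
  sInf {N : ℕ | ∃ (i : ℤ) (n : ℕ), IsAnomalyOcc x i n ∧ IsPeriodicWith (removeBlock x i n) N}

/-- The anomaly size `a(x)`: the minimum of `n` over anomaly occurrences `(i,n)` of `x`. -/
noncomputable def anomalySize {A : Type*} (x : ℤ → A) : ℕ :=
  sInf {n : ℕ | ∃ i : ℤ, IsAnomalyOcc x i n}

/-- The orbit `{σ^k(x) : k ∈ ℤ}` of a bi-infinite sequence. -/
def seqOrbit {A : Type*} (x : ℤ → A) : Set (ℤ → A) := {y | ∃ k : ℤ, y = shiftZ k x}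

/-- The subshift generated by `x`: the closure of its orbit in the product topology. -/
def subshiftGen {A : Type*} [TopologicalSpace A] (x : ℤ → A) : Set (ℤ → A) :=
  closure (seqOrbit x)

/-- Two subshifts are conjugate if there is a homeomorphism between them commuting
with the shift. -/
def Conjugate {A B : Type*} [TopologicalSpace A] [TopologicalSpace B]
    (X : Set (ℤ → A)) (Y : Set (ℤ → B)) : Prop :=
  ∃ φ : X ≃ₜ Y, ∀ (u : ℤ → A) (hu : u ∈ X) (hu' : shiftMap u ∈ X),
    ((φ ⟨shiftMap u, hu'⟩ : Y) : ℤ → B) = shiftMap ((φ ⟨u, hu⟩ : Y) : ℤ → B)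

/-- The relation generating the suspension: `(x,s) ∼ (σ^n(x), s - n)`. -/
def SuspRel {A : Type*} (X : Set (ℤ → A)) : (X × ℝ) → (X × ℝ) → Prop :=
  fun p q => ∃ n : ℤ, (q.1 : ℤ → A) = shiftZ n (p.1 : ℤ → A) ∧ q.2 = p.2 - n

/-- The suspension `ΣX` of a subshift `X`. -/
def Susp {A : Type*} [TopologicalSpace A] (X : Set (ℤ → A)) : Type _ :=
  Quot (SuspRel X)

instance {A : Type*} [TopologicalSpace A] (X : Set (ℤ → A)) : TopologicalSpace (Susp X) :=
  instTopologicalSpaceQuot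

/-- The suspension flow `φ_t [x,s] = [x, s+t]`. -/
def suspFlow {A : Type*} [TopologicalSpace A] (X : Set (ℤ → A)) (t : ℝ) :
    Susp X → Susp X :=
  Quot.lift (fun p => Quot.mk _ (p.1, p.2 + t)) (by
    rintro p r ⟨n, h1, h2⟩
    exact Quot.sound ⟨n, h1, by rw [h2]; ring⟩)

/-- Two subshifts are flow equivalent if there is a homeomorphism of their suspensions
taking flow lines to flow lines in an orientation-preserving way. -/
def FlowEquiv {A B : Type*} [TopologicalSpace A] [TopologicalSpace B]
    (X : Set (ℤ → A)) (Y : Set (ℤ → B)) : Prop :=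
  ∃ h : Susp X ≃ₜ Susp Y, ∀ u : Susp X, ∃ τ : ℝ → ℝ,
    StrictMono τ ∧ Function.Bijective τ ∧ τ 0 = 0 ∧
      ∀ t : ℝ, h (suspFlow X t u) = suspFlow Y (τ t) (h u)

/-- Cell lengths `z_n` for the type-`S` skew Sturmian sequence `S(0, q/p)`, with `β = p/q`. -/
noncomputable def cellLenS (p q : ℤ) (n : ℤ) : ℕ :=
  if n < 0 then
    ({k : ℤ | (n : ℚ) < (k : ℚ) * ((p : ℚ) / (q : ℚ)) ∧
        (k : ℚ) * ((p : ℚ) / (q : ℚ)) ≤ (n : ℚ) + 1}).ncard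
  else if n = 0 then
    ({k : ℤ | 0 < (k : ℚ) * ((p : ℚ) / (q : ℚ)) ∧
        (k : ℚ) * ((p : ℚ) / (q : ℚ)) < 1}).ncard
  else
    ({k : ℤ | (n : ℚ) ≤ (k : ℚ) * ((p : ℚ) / (q : ℚ)) ∧
        (k : ℚ) * ((p : ℚ) / (q : ℚ)) < (n : ℚ) + 1}).ncard

/-- Cell lengths `z′_n` for the type-`S′` skew Sturmian sequence `S′(0, q/p)`, with `β = p/q`. -/
noncomputable def cellLenS' (p q : ℤ) (n : ℤ) : ℕ :=
  if n < 0 then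
    ({k : ℤ | (n : ℚ) ≤ (k : ℚ) * ((p : ℚ) / (q : ℚ)) ∧
        (k : ℚ) * ((p : ℚ) / (q : ℚ)) < (n : ℚ) + 1}).ncard
  else if n = 0 then
    ({k : ℤ | 0 ≤ (k : ℚ) * ((p : ℚ) / (q : ℚ)) ∧
        (k : ℚ) * ((p : ℚ) / (q : ℚ)) ≤ 1}).ncard
  else
    ({k : ℤ | (n : ℚ) < (k : ℚ) * ((p : ℚ) / (q : ℚ)) ∧
        (k : ℚ) * ((p : ℚ) / (q : ℚ)) ≤ (n : ℚ) + 1}).ncard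

/-- The position `L_n` of the leading `1` of the cell `B_n`. -/
noncomputable def cellStart (z : ℤ → ℕ) (n : ℤ) : ℤ :=
  if 0 ≤ n then n + ∑ j ∈ Finset.Ico (0 : ℤ) n, (z j : ℤ)
  else n - ∑ j ∈ Finset.Ico n (0 : ℤ), (z j : ℤ)

/-- The `{0,1}`-sequence determined by cell lengths `z`: a `1` at each position `L_n`
and `0` elsewhere. -/
noncomputable def seqOfCells (z : ℤ → ℕ) : ℤ → Fin 2 :=
  fun i => if ∃ n : ℤ, i = cellStart z n then 1 else 0

/-- The type-`S` skew Sturmian sequence `S(0, q/p)`. -/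
noncomputable def sturmS (p q : ℤ) : ℤ → Fin 2 := seqOfCells (cellLenS p q)

/-- The type-`S′` skew Sturmian sequence `S′(0, q/p)`. -/
noncomputable def sturmS' (p q : ℤ) : ℤ → Fin 2 := seqOfCells (cellLenS' p q)

lemma shiftZ_shiftZ {A : Type*} (a b : ℤ) (x : ℤ → A) :
    shiftZ a (shiftZ b x) = shiftZ (b + a) x := by
  funext i; show x (i + a + b) = x (i + (b + a)); ring_nf

lemma shiftZ_zero {A : Type*} (x : ℤ → A) : shiftZ 0 x = x := by
  funext i; simp [shiftZ]

lemma mem_seqOrbit_self {A : Type*} (x : ℤ → A) : x ∈ seqOrbit x :=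
  ⟨0, (shiftZ_zero x).symm⟩

lemma continuous_shiftZ {A : Type*} [TopologicalSpace A] (k : ℤ) :
    Continuous (shiftZ k : (ℤ → A) → (ℤ → A)) :=
  continuous_pi fun i => continuous_apply (i + k)

lemma mem_subshiftGen_self {A : Type*} [TopologicalSpace A] (x : ℤ → A) :
    x ∈ subshiftGen x := subset_closure (mem_seqOrbit_self x)

lemma shiftZ_mem_subshiftGen {A : Type*} [TopologicalSpace A] {x u : ℤ → A} (k : ℤ)
    (hu : u ∈ subshiftGen x) : shiftZ k u ∈ subshiftGen x := by
  have hsub : subshiftGen x ⊆ (shiftZ k) ⁻¹' (subshiftGen x) := by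
    apply closure_minimal
    · rintro y ⟨j, rfl⟩
      exact subset_closure ⟨j + k, shiftZ_shiftZ k j x⟩
    · exact IsClosed.preimage (continuous_shiftZ k) isClosed_closure
  exact hsub hu

/-- Characterization of membership in the subshift generated by `x`, for sequences
over a discrete space. -/
lemma mem_subshiftGen_iff {A : Type*} [TopologicalSpace A] [DiscreteTopology A]
    {x y : ℤ → A} :
    y ∈ subshiftGen x ↔ ∀ M : ℕ, ∃ k : ℤ, ∀ i : ℤ, |i| ≤ (M : ℤ) → y i = x (i + k) := by
  constructor
  · intro hy M
    have hopen : IsOpen {z : ℤ → A | ∀ i ∈ Finset.Icc (-(M:ℤ)) M, z i = y i} := by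
      have : {z : ℤ → A | ∀ i ∈ Finset.Icc (-(M:ℤ)) M, z i = y i}
          = ⋂ i ∈ Finset.Icc (-(M:ℤ)) M, {z : ℤ → A | z i = y i} := by
        ext z; simp
      rw [this]
      apply isOpen_biInter_finset
      intro i _
      have : {z : ℤ → A | z i = y i} = (fun z : ℤ → A => z i) ⁻¹' {y i} := rfl
      rw [this]
      exact (continuous_apply i).isOpen_preimage _ (isOpen_discrete _)
    have hmem : y ∈ {z : ℤ → A | ∀ i ∈ Finset.Icc (-(M:ℤ)) M, z i = y i} := by
      intro i _; rfl
    obtain ⟨z, hz1, hz2⟩ := mem_closure_iff.1 hy _ hopen hmem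
    obtain ⟨k, rfl⟩ := hz2
    refine ⟨k, fun i hi => ?_⟩
    have : i ∈ Finset.Icc (-(M:ℤ)) M := by
      rw [Finset.mem_Icc]; constructor <;> [linarith [neg_abs_le i]; linarith [le_abs_self i]]
    exact (hz1 i this).symm
  · intro h
    rw [subshiftGen, mem_closure_iff]
    intro O hO hyO
    obtain ⟨I, u, hu, hsub⟩ := isOpen_pi_iff.1 hO y hyO
    set M : ℕ := I.sup (fun i => i.natAbs) with hM
    obtain ⟨k, hk⟩ := h M
    refine ⟨shiftZ k x, hsub ?_, ⟨k, rfl⟩⟩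
    intro i hi
    have habs : |i| ≤ (M : ℤ) := by
      have : i.natAbs ≤ M := Finset.le_sup (f := fun i : ℤ => i.natAbs) hi
      rw [Int.abs_eq_natAbs]; exact_mod_cast this
    have : (shiftZ k x) i = y i := (hk i habs).symm
    rw [this]
    exact (hu i hi).2
open Filter

section PerHelpers

variable {w : ℤ → Fin 2} {T : ℤ}

lemma per_mul (hw : ∀ i, w (i + T) = w i) : ∀ (s i : ℤ), w (i + T * s) = w i := by
  intro s
  induction s using Int.induction_on with
  | zero => intro i; simp
  | succ n ih =>
      intro i
      have h1 : i + T * ((n : ℤ) + 1) = (i + T * n) + T := by ring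
      rw [h1, hw (i + T * n), ih i]
  | pred n ih =>
      intro i
      have h1 : (i + T * (-(n : ℤ) - 1)) + T = i + T * (-(n : ℤ)) := by ring
      have := hw (i + T * (-(n : ℤ) - 1))
      rw [h1] at this
      rw [← this, ih i]

lemma per_spread (hw : ∀ i, w (i + T) = w i) (hT : 0 < T) {a s t : ℤ}
    (h : ∀ i, a ≤ i → i < a + T → w (i + s) = w (i + t)) :
    ∀ j, w (j + s) = w (j + t) := by
  intro j
  set i : ℤ := a + (j - a) % T with hi
  have h0 : 0 ≤ (j - a) % T := Int.emod_nonneg _ (by omega)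
  have h1 : (j - a) % T < T := Int.emod_lt_of_pos _ hT
  have hj : j = i + T * ((j - a) / T) := by
    have := Int.mul_ediv_add_emod (j - a) T
    omega
  have e1 : j + s = (i + s) + T * ((j - a) / T) := by omega
  have e2 : j + t = (i + t) + T * ((j - a) / T) := by omega
  rw [e1, e2, per_mul hw, per_mul hw]
  exact h i (by omega) (by omega)

end PerHelpers

structure TailData (x w : ℤ → Fin 2) (T c R L : ℤ) : Prop where
  hT : 2 ≤ T
  per : ∀ i, w (i + T) = w i
  least : ∀ s : ℤ, (∀ i, w (i + s) = w i) → T ∣ s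
  right : ∀ i, R ≤ i → x i = w i
  left : ∀ i, i ≤ L → x i = w (i + c)
  hRL : R ≤ L + T
  hc : ¬ T ∣ c

namespace TailData

variable {x w : ℤ → Fin 2} {T c R L : ℤ} (D : TailData x w T c R L)

include D

lemma hT0 : (0 : ℤ) < T := by have := D.hT; omega

/-- Every shift of `w` belongs to the subshift generated by `x`. -/
lemma orbit_w_sub (r : ℤ) : shiftZ r w ∈ subshiftGen x := by
  rw [mem_subshiftGen_iff]
  intro M
  set n : ℤ := |R| + (M : ℤ) + |r| with hn
  have hn0 : 0 ≤ n := by positivity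
  have hTn : 2 * n ≤ T * n := by
    apply mul_le_mul_of_nonneg_right D.hT hn0
  refine ⟨r + T * n, fun i hi => ?_⟩
  have hge : R ≤ i + (r + T * n) := by
    have h1 : -(M : ℤ) ≤ i := by have := neg_abs_le i; omega
    have h2 : -|r| ≤ r := neg_abs_le r
    have h3 : R ≤ |R| := le_abs_self R
    omega
  have e1 : x (i + (r + T * n)) = w (i + (r + T * n)) := D.right _ hge
  have e2 : i + (r + T * n) = (i + r) + T * n := by ring
  show w (i + r) = x (i + (r + T * n))
  rw [e1, e2, per_mul D.per]

lemma w_mem : w ∈ subshiftGen x := by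
  have := D.orbit_w_sub 0
  rwa [shiftZ_zero] at this

/-- The subshift generated by `x` consists of the orbit of `x` and the orbit of `w`. -/
lemma closure_sub {y : ℤ → Fin 2} (hy : y ∈ subshiftGen x) :
    (∃ k : ℤ, y = shiftZ k x) ∨ (∃ r : ℤ, y = shiftZ r w) := by
  have H : ∀ M : ℕ, ∃ k : ℤ, ∀ i : ℤ, |i| ≤ (M : ℤ) → y i = x (i + k) :=
    mem_subshiftGen_iff.1 hy
  by_cases hcof : ∃ k : ℤ, ∀ M : ℕ, ∀ i : ℤ, |i| ≤ (M : ℤ) → y i = x (i + k)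
  · obtain ⟨k, hk⟩ := hcof
    refine Or.inl ⟨k, funext fun i => hk i.natAbs i (by rw [Int.abs_eq_natAbs])⟩
  · push_neg at hcof
    -- for each k, a window size where agreement fails
    have hMk : ∀ k : ℤ, ∃ M : ℕ, ¬ ∀ i : ℤ, |i| ≤ (M : ℤ) → y i = x (i + k) := by
      intro k
      obtain ⟨M, i, hi, hne⟩ := hcof k
      exact ⟨M, fun h => hne (h i hi)⟩
    choose Mk hMk using hMk
    have key : ∀ M : ℕ, ∃ r : ℤ, ∀ i : ℤ, |i| ≤ (M : ℤ) → y i = w (i + r) := by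
      intro M
      set B : ℤ := (M : ℤ) + |R| + |L| + |c| + 1 with hB
      set N : ℕ := M + (Finset.Icc (-B) B).sup (fun k => Mk k) with hN
      obtain ⟨k, hk⟩ := H N
      have hMN : (M : ℤ) ≤ (N : ℤ) := by exact_mod_cast Nat.le_add_right M _
      have hkB : B < |k| := by
        by_contra hcon
        push_neg at hcon
        have hkmem : k ∈ Finset.Icc (-B) B := by
          rw [Finset.mem_Icc]
          constructor
          · have := neg_abs_le k; omega
          · have := le_abs_self k; omega
        have hle : Mk k ≤ N := by
          have h2 : Mk k ≤ (Finset.Icc (-B) B).sup (fun k => Mk k) :=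
            Finset.le_sup (f := fun k : ℤ => Mk k) hkmem
          omega
        exact hMk k (fun i hi => hk i (le_trans hi (by exact_mod_cast hle)))
      rcases le_or_gt 0 k with hk0 | hk0
      · -- k > B : right tail
        have hkgt : B < k := by rwa [abs_of_nonneg hk0] at hkB
        refine ⟨k, fun i hi => ?_⟩
        have h1 : y i = x (i + k) := hk i (le_trans hi hMN)
        have h2 : R ≤ i + k := by
          have ha := neg_abs_le i
          have hb := le_abs_self R
          have hc1 := abs_nonneg L
          have hc2 := abs_nonneg c
          omega
        rw [h1, D.right _ h2]
      · -- k < -B : left tail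
        have hklt : k < -B := by rw [abs_of_neg hk0] at hkB; omega
        refine ⟨k + c, fun i hi => ?_⟩
        have h1 : y i = x (i + k) := hk i (le_trans hi hMN)
        have h2 : i + k ≤ L := by
          have ha := le_abs_self i
          have hb := neg_abs_le L
          have hc1 := abs_nonneg R
          have hc2 := abs_nonneg c
          omega
        rw [h1, D.left _ h2]
        congr 1
        ring
    obtain ⟨r₀, hr₀⟩ := key T.toNat
    have hTnat : ((T.toNat : ℕ) : ℤ) = T := Int.toNat_of_nonneg (by have := D.hT; omega)
    refine Or.inr ⟨r₀, funext fun i => ?_⟩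
    obtain ⟨r, hr⟩ := key (max T.toNat i.natAbs)
    have hsame : ∀ j, w (j + r) = w (j + r₀) := by
      apply per_spread D.per D.hT0 (a := 0)
      intro j hj0 hjT
      have hjabs : |j| ≤ ((max T.toNat i.natAbs : ℕ) : ℤ) := by
        rw [abs_of_nonneg hj0]
        have : ((max T.toNat i.natAbs : ℕ) : ℤ) = max ((T.toNat : ℕ) : ℤ) ((i.natAbs : ℕ) : ℤ) := by
          exact_mod_cast rfl
        rw [this, hTnat]
        have := le_max_left T ((i.natAbs : ℕ) : ℤ)
        omega
      have h1 : y j = w (j + r) := hr j hjabs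
      have h2 : y j = w (j + r₀) := by
        apply hr₀ j
        rw [hTnat, abs_of_nonneg hj0]; omega
      rw [← h1, h2]
    have hiabs : |i| ≤ ((max T.toNat i.natAbs : ℕ) : ℤ) := by
      have : (i.natAbs : ℤ) ≤ ((max T.toNat i.natAbs : ℕ) : ℤ) := by
        exact_mod_cast Nat.le_max_right T.toNat i.natAbs
      rw [Int.abs_eq_natAbs]; omega
    rw [hr i hiabs]
    show w (i + r) = shiftZ r₀ w i
    rw [hsame i]; rfl

/-- `x` is not periodic. -/
lemma not_per : ∀ N : ℤ, 0 < N → ¬ (∀ i, x (i + N) = x i) := by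
  intro N hN hper
  have hTN : T ∣ N := by
    apply D.least
    have : ∀ j, w (j + N) = w (j + 0) := by
      apply per_spread D.per D.hT0 (a := R)
      intro i hi1 hi2
      have h1 : x (i + N) = w (i + N) := D.right _ (by omega)
      have h2 : x i = w i := D.right _ hi1
      rw [← h1, hper i, h2, add_zero]
    intro j
    have := this j
    rwa [add_zero] at this
  have hperm : ∀ (m : ℕ) (i : ℤ), x (i + N * m) = x i := by
    intro m
    induction m with
    | zero => intro i; simp
    | succ n ih =>
        intro i
        have e : i + N * ((n : ℤ) + 1) = (i + N * n) + N := by ring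
        rw [Nat.cast_succ, e, hper, ih]
  set m : ℕ := (R - L + T).toNat with hm
  have hmge : R - L + T ≤ (m : ℤ) := Int.self_le_toNat _
  have hNm : (m : ℤ) ≤ N * m := le_mul_of_one_le_left (by positivity) (by omega)
  set K : ℤ := N * m with hK
  have hTK : T ∣ K := Dvd.dvd.mul_right hTN _
  obtain ⟨s, hs⟩ := hTK
  have hwc : ∀ j, w (j + c) = w (j + 0) := by
    apply per_spread D.per D.hT0 (a := R - K)
    intro i hi1 hi2
    have hiL : i ≤ L := by omega
    have hiK : R ≤ i + K := by omega
    have h1 : x i = w (i + c) := D.left _ hiL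
    have h2 : x (i + K) = w (i + K) := D.right _ hiK
    have h3 : x (i + K) = x i := by rw [hK]; exact hperm m i
    have h4 : w (i + K) = w i := by rw [hs, per_mul D.per]
    rw [← h1, ← h3, h2, h4, add_zero]
  apply D.hc
  apply D.least
  intro j
  have := hwc j
  rwa [add_zero] at this

end TailData

lemma shiftMap_eq_shiftZ {A : Type*} (v : ℤ → A) : shiftMap v = shiftZ 1 v := rfl

section ConjHelpers

open Filter

variable {X Y : Set (ℤ → Fin 2)}

lemma commute_shiftZ (hX : ∀ (u : ℤ → Fin 2), u ∈ X → ∀ k : ℤ, shiftZ k u ∈ X)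
    (φ : X ≃ₜ Y)
    (hφ : ∀ (u : ℤ → Fin 2) (hu : u ∈ X) (hu' : shiftMap u ∈ X),
      ((φ ⟨shiftMap u, hu'⟩ : Y) : ℤ → Fin 2) = shiftMap ((φ ⟨u, hu⟩ : Y) : ℤ → Fin 2)) :
    ∀ (k : ℤ) (u : ℤ → Fin 2) (hu : u ∈ X) (hu2 : shiftZ k u ∈ X),
      ((φ ⟨shiftZ k u, hu2⟩ : Y) : ℤ → Fin 2) = shiftZ k ((φ ⟨u, hu⟩ : Y) : ℤ → Fin 2) := by
  intro k u hu
  induction k using Int.induction_on with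
  | zero =>
      intro hu2
      have e : shiftZ 0 u = u := shiftZ_zero u
      have h2 : (⟨shiftZ 0 u, hu2⟩ : X) = ⟨u, hu⟩ := Subtype.ext e
      rw [h2, shiftZ_zero]
  | succ n ih =>
      intro hu2
      have e : shiftZ ((n : ℤ) + 1) u = shiftMap (shiftZ (n : ℤ) u) := by
        funext i
        show u (i + ((n : ℤ) + 1)) = u (i + 1 + (n : ℤ))
        congr 1; ring
      have m1 : shiftZ (n : ℤ) u ∈ X := hX u hu n
      have m2 : shiftMap (shiftZ (n : ℤ) u) ∈ X := by rw [← e]; exact hu2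
      have h2 : (⟨shiftZ ((n : ℤ) + 1) u, hu2⟩ : X) = ⟨shiftMap (shiftZ (n : ℤ) u), m2⟩ :=
        Subtype.ext e
      rw [h2, hφ _ m1 m2, ih m1]
      funext i
      show ((φ ⟨u, hu⟩ : Y) : ℤ → Fin 2) (i + 1 + (n : ℤ))
          = ((φ ⟨u, hu⟩ : Y) : ℤ → Fin 2) (i + ((n : ℤ) + 1))
      congr 1; ring
  | pred n ih =>
      intro hu2
      set v : ℤ → Fin 2 := shiftZ (-(n : ℤ) - 1) u with hv
      have e : shiftMap v = shiftZ (-(n : ℤ)) u := by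
        funext i
        show u (i + 1 + (-(n : ℤ) - 1)) = u (i + -(n : ℤ))
        congr 1; ring
      have m1 : v ∈ X := hu2
      have m2 : shiftMap v ∈ X := by rw [e]; exact hX u hu _
      have h1 := hφ v m1 m2
      have h2 : (⟨shiftMap v, m2⟩ : X) = ⟨shiftZ (-(n : ℤ)) u, hX u hu _⟩ := Subtype.ext e
      rw [h2, ih (hX u hu _)] at h1
      -- h1 : shiftZ (-(n:ℤ)) F = shiftMap ((φ ⟨v, m1⟩).val)  with F = (φ ⟨u,hu⟩).val
      funext i
      have h3 := congrFun h1 (i - 1)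
      show ((φ ⟨v, m1⟩ : Y) : ℤ → Fin 2) i
          = ((φ ⟨u, hu⟩ : Y) : ℤ → Fin 2) (i + (-(n : ℤ) - 1))
      have e2 : i - 1 + 1 = i := by ring
      have e3 : i - 1 + -(n : ℤ) = i + (-(n : ℤ) - 1) := by ring
      simp only [shiftZ, shiftMap] at h3
      rw [e2, e3] at h3
      exact h3.symm

lemma symm_conj (hX : ∀ (u : ℤ → Fin 2), u ∈ X → ∀ k : ℤ, shiftZ k u ∈ X)
    (φ : X ≃ₜ Y)
    (hφ : ∀ (u : ℤ → Fin 2) (hu : u ∈ X) (hu' : shiftMap u ∈ X),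
      ((φ ⟨shiftMap u, hu'⟩ : Y) : ℤ → Fin 2) = shiftMap ((φ ⟨u, hu⟩ : Y) : ℤ → Fin 2)) :
    ∀ (v : ℤ → Fin 2) (hv : v ∈ Y) (hv' : shiftMap v ∈ Y),
      ((φ.symm ⟨shiftMap v, hv'⟩ : X) : ℤ → Fin 2)
        = shiftMap ((φ.symm ⟨v, hv⟩ : X) : ℤ → Fin 2) := by
  intro v hv hv'
  set u : X := φ.symm ⟨v, hv⟩ with hu
  have hsu : shiftMap (u : ℤ → Fin 2) ∈ X := by
    rw [shiftMap_eq_shiftZ]; exact hX _ u.2 1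
  have h1 := hφ (u : ℤ → Fin 2) u.2 hsu
  have h2 : φ ⟨(u : ℤ → Fin 2), u.2⟩ = (⟨v, hv⟩ : Y) := by
    rw [Subtype.coe_eta]
    exact φ.apply_symm_apply _
  rw [h2] at h1
  have h3 : φ ⟨shiftMap (u : ℤ → Fin 2), hsu⟩ = (⟨shiftMap v, hv'⟩ : Y) := Subtype.ext h1
  have h4 : (⟨shiftMap (u : ℤ → Fin 2), hsu⟩ : X) = φ.symm ⟨shiftMap v, hv'⟩ := by
    rw [← h3, φ.symm_apply_apply]
  rw [← h4]

lemma tendsto_subtype_of_eventually {S : Set (ℤ → Fin 2)} {f : ℕ → S} {l : S}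
    (h : ∀ i : ℤ, ∀ᶠ n in atTop, ((f n : ℤ → Fin 2)) i = (l : ℤ → Fin 2) i) :
    Tendsto f atTop (nhds l) := by
  rw [tendsto_subtype_rng, tendsto_pi_nhds]
  intro i
  refine Filter.Tendsto.congr' ?_ tendsto_const_nhds
  filter_upwards [h i] with n hn using hn.symm

lemma val_eq_of_tendsto {S : Set (ℤ → Fin 2)} {f : ℕ → S} {l : S}
    (hf : Tendsto f atTop (nhds l)) {m : ℤ → Fin 2}
    (h : ∀ i : ℤ, ∀ᶠ n in atTop, ((f n : ℤ → Fin 2)) i = m i) :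
    (l : ℤ → Fin 2) = m := by
  have h1 : Tendsto (fun n => ((f n : ℤ → Fin 2))) atTop (nhds (l : ℤ → Fin 2)) :=
    tendsto_subtype_rng.1 hf
  have h2 : Tendsto (fun n => ((f n : ℤ → Fin 2))) atTop (nhds m) := by
    rw [tendsto_pi_nhds]
    intro i
    refine Filter.Tendsto.congr' ?_ tendsto_const_nhds
    filter_upwards [h i] with n hn using hn.symm
  exact tendsto_nhds_unique h1 h2

end ConjHelpers

section Invariant

open Filter

variable {x x' w w' : ℤ → Fin 2} {T c R L T' c' R' L' : ℤ}

lemma period_dvd (D : TailData x w T c R L) (D' : TailData x' w' T' c' R' L')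
    (φ : (subshiftGen x) ≃ₜ (subshiftGen x'))
    (hφ : ∀ (u : ℤ → Fin 2) (hu : u ∈ subshiftGen x) (hu' : shiftMap u ∈ subshiftGen x),
      ((φ ⟨shiftMap u, hu'⟩ : subshiftGen x') : ℤ → Fin 2)
        = shiftMap ((φ ⟨u, hu⟩ : subshiftGen x') : ℤ → Fin 2)) :
    T' ∣ T := by
  have hXinv : ∀ (u : ℤ → Fin 2), u ∈ subshiftGen x → ∀ k : ℤ, shiftZ k u ∈ subshiftGen x :=
    fun u hu k => shiftZ_mem_subshiftGen k hu
  have hcomm := commute_shiftZ hXinv φ hφ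
  have hwX : w ∈ subshiftGen x := D.w_mem
  set y1 : ℤ → Fin 2 := ((φ ⟨w, hwX⟩ : subshiftGen x') : ℤ → Fin 2) with hy1
  have hy1mem : y1 ∈ subshiftGen x' := (φ ⟨w, hwX⟩).2
  have hTw : shiftZ T w = w := funext fun i => D.per i
  have hmem2 : shiftZ T w ∈ subshiftGen x := by rw [hTw]; exact hwX
  have h1 : shiftZ T y1 = y1 := by
    have h := hcomm T w hwX hmem2
    have h2 : (⟨shiftZ T w, hmem2⟩ : subshiftGen x) = ⟨w, hwX⟩ := Subtype.ext hTw
    rw [h2] at h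
    exact h.symm
  have hper1 : ∀ i, y1 (i + T) = y1 i := fun i => congrFun h1 i
  rcases D'.closure_sub hy1mem with ⟨k, hk⟩ | ⟨r, hr⟩
  · exfalso
    apply D'.not_per T D.hT0
    intro j
    have h := hper1 (j - k)
    rw [hk] at h
    simp only [shiftZ] at h
    have e1 : j - k + T + k = j + T := by ring
    have e2 : j - k + k = j := by ring
    rwa [e1, e2] at h
  · apply D'.least
    intro j
    have h := hper1 (j - r)
    rw [hr] at h
    simp only [shiftZ] at h
    have e1 : j - r + T + r = j + T := by ring
    have e2 : j - r + r = j := by ring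
    rwa [e1, e2] at h

theorem conj_invariant (D : TailData x w T c R L) (D' : TailData x' w' T' c' R' L')
    (hconj : Conjugate (subshiftGen x) (subshiftGen x')) :
    T = T' ∧ T ∣ (c - c') := by
  obtain ⟨φ, hφ⟩ := hconj
  have hXinv : ∀ (u : ℤ → Fin 2), u ∈ subshiftGen x → ∀ k : ℤ, shiftZ k u ∈ subshiftGen x :=
    fun u hu k => shiftZ_mem_subshiftGen k hu
  have hYinv : ∀ (u : ℤ → Fin 2), u ∈ subshiftGen x' → ∀ k : ℤ, shiftZ k u ∈ subshiftGen x' :=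
    fun u hu k => shiftZ_mem_subshiftGen k hu
  have hφs := symm_conj hXinv φ hφ
  have hTT' : T' ∣ T := period_dvd D D' φ hφ
  have hT'T : T ∣ T' := period_dvd D' D φ.symm hφs
  have hTeq : T = T' := Int.dvd_antisymm (by have := D.hT; omega) (by have := D'.hT; omega) hT'T hTT'
  refine ⟨hTeq, ?_⟩
  have hcomm := commute_shiftZ hXinv φ hφ
  have hcomms := commute_shiftZ hYinv φ.symm hφs
  have hxX : x ∈ subshiftGen x := mem_subshiftGen_self x
  set y0 : ℤ → Fin 2 := ((φ ⟨x, hxX⟩ : subshiftGen x') : ℤ → Fin 2) with hy0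
  have hy0mem : y0 ∈ subshiftGen x' := (φ ⟨x, hxX⟩).2
  obtain ⟨k, hk⟩ : ∃ k : ℤ, y0 = shiftZ k x' := by
    rcases D'.closure_sub hy0mem with h | ⟨r, hr⟩
    · exact h
    · exfalso
      have hy0per : shiftZ T' y0 = y0 := by
        funext i
        show y0 (i + T') = y0 i
        rw [hr]
        show w' (i + T' + r) = w' (i + r)
        have e1 : i + T' + r = (i + r) + T' := by ring
        rw [e1, D'.per]
      have m2 : shiftZ T' y0 ∈ subshiftGen x' := by rw [hy0per]; exact hy0mem
      have h := hcomms T' y0 hy0mem m2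
      have h2 : (⟨shiftZ T' y0, m2⟩ : subshiftGen x') = ⟨y0, hy0mem⟩ := Subtype.ext hy0per
      rw [h2] at h
      have h3 : (⟨y0, hy0mem⟩ : subshiftGen x') = φ ⟨x, hxX⟩ := Subtype.ext rfl
      rw [h3, φ.symm_apply_apply] at h
      -- h : x = shiftZ T' x
      apply D.not_per T' D'.hT0
      intro i
      exact (congrFun h i).symm
  have hwX : w ∈ subshiftGen x := D.w_mem
  -- first limit: shiftZ (T*n) x → w, image → shiftZ k w'
  have hFmem : ∀ n : ℕ, shiftZ (T * n) x ∈ subshiftGen x := fun n => hXinv x hxX _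
  set F : ℕ → (subshiftGen x) := fun n => ⟨shiftZ (T * n) x, hFmem n⟩ with hF
  have hFtend : Tendsto F atTop (nhds ⟨w, hwX⟩) := by
    apply tendsto_subtype_of_eventually
    intro i
    rw [eventually_atTop]
    refine ⟨(R - i).toNat, fun n hn => ?_⟩
    have h1 : R - i ≤ (n : ℤ) := le_trans (Int.self_le_toNat _) (by exact_mod_cast hn)
    have h2 : (n : ℤ) ≤ T * n := le_mul_of_one_le_left (by positivity) (by have := D.hT; omega)
    show x (i + T * n) = w i
    rw [D.right _ (by omega), per_mul D.per]
  have hφF : Tendsto (fun n => φ (F n)) atTop (nhds (φ ⟨w, hwX⟩)) :=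
    (φ.continuous.tendsto _).comp hFtend
  have hvalw : ((φ ⟨w, hwX⟩ : subshiftGen x') : ℤ → Fin 2) = shiftZ k w' := by
    apply val_eq_of_tendsto hφF
    intro i
    rw [eventually_atTop]
    refine ⟨(R' - i - k).toNat, fun n hn => ?_⟩
    have h1 : R' - i - k ≤ (n : ℤ) := le_trans (Int.self_le_toNat _) (by exact_mod_cast hn)
    have h2 : (n : ℤ) ≤ T * n := le_mul_of_one_le_left (by positivity) (by have := D.hT; omega)
    have h3 := hcomm (T * n) x hxX (hFmem n)
    show ((φ (F n) : subshiftGen x') : ℤ → Fin 2) i = shiftZ k w' i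
    rw [hF]
    rw [h3]
    show y0 (i + T * n) = w' (i + k)
    rw [hk]
    show x' (i + T * n + k) = w' (i + k)
    rw [D'.right _ (by omega)]
    have e1 : i + T * n + k = (i + k) + T' * n := by rw [← hTeq]; ring
    rw [e1, per_mul D'.per]
  -- second limit: shiftZ (-(T*n)) x → shiftZ c w, image → shiftZ (k + c') w'
  have hGmem : ∀ n : ℕ, shiftZ (-(T * n)) x ∈ subshiftGen x := fun n => hXinv x hxX _
  set G : ℕ → (subshiftGen x) := fun n => ⟨shiftZ (-(T * n)) x, hGmem n⟩ with hG
  have hcw : shiftZ c w ∈ subshiftGen x := D.orbit_w_sub c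
  have hGtend : Tendsto G atTop (nhds ⟨shiftZ c w, hcw⟩) := by
    apply tendsto_subtype_of_eventually
    intro i
    rw [eventually_atTop]
    refine ⟨(i - L).toNat, fun n hn => ?_⟩
    have h1 : i - L ≤ (n : ℤ) := le_trans (Int.self_le_toNat _) (by exact_mod_cast hn)
    have h2 : (n : ℤ) ≤ T * n := le_mul_of_one_le_left (by positivity) (by have := D.hT; omega)
    show x (i + -(T * n)) = w (i + c)
    rw [D.left _ (by omega)]
    have e1 : i + -(T * n) + c = (i + c) + T * (-(n : ℤ)) := by ring
    rw [e1, per_mul D.per]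
  have hφG : Tendsto (fun n => φ (G n)) atTop (nhds (φ ⟨shiftZ c w, hcw⟩)) :=
    (φ.continuous.tendsto _).comp hGtend
  have hvalc : ((φ ⟨shiftZ c w, hcw⟩ : subshiftGen x') : ℤ → Fin 2) = shiftZ (k + c') w' := by
    apply val_eq_of_tendsto hφG
    intro i
    rw [eventually_atTop]
    refine ⟨(i + k - L').toNat, fun n hn => ?_⟩
    have h1 : i + k - L' ≤ (n : ℤ) := le_trans (Int.self_le_toNat _) (by exact_mod_cast hn)
    have h2 : (n : ℤ) ≤ T * n := le_mul_of_one_le_left (by positivity) (by have := D.hT; omega)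
    have h3 := hcomm (-(T * n)) x hxX (hGmem n)
    show ((φ (G n) : subshiftGen x') : ℤ → Fin 2) i = shiftZ (k + c') w' i
    rw [hG, h3]
    show y0 (i + -(T * n)) = w' (i + (k + c'))
    rw [hk]
    show x' (i + -(T * n) + k) = w' (i + (k + c'))
    rw [D'.left _ (by omega)]
    have e1 : i + -(T * n) + k + c' = (i + (k + c')) + T' * (-(n : ℤ)) := by rw [← hTeq]; ring
    rw [e1, per_mul D'.per]
  -- combine
  have h4 := hcomm c w hwX hcw
  rw [hvalw, hvalc, shiftZ_shiftZ] at h4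
  -- h4 : shiftZ (k + c') w' = shiftZ (k + c) w'
  have h5 : ∀ j, w' (j + (c - c')) = w' j := by
    intro j
    have := congrFun h4 (j - k - c')
    simp only [shiftZ] at this
    have e1 : j - k - c' + (k + c') = j := by ring
    have e2 : j - k - c' + (k + c) = j + (c - c') := by ring
    rw [e1, e2] at this
    exact this.symm
  have := D'.least _ h5
  rwa [hTeq]

end Invariant

section Comb

/-- The generic "position" function `n ↦ n + ⌊(nq+t)/p⌋ + u`. -/
def gfun (p q t u : ℤ) : ℤ → ℤ := fun n => n + (n * q + t) / p + u

/-- The periodic sequence with `1`s exactly on the range of `gfun p q t u`. -/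
noncomputable def wfun (p q t u : ℤ) : ℤ → Fin 2 :=
  fun i => if ∃ n : ℤ, i = gfun p q t u n then 1 else 0

variable {p q : ℤ}

lemma gfun_add_p (hp : 0 < p) (t u n : ℤ) :
    gfun p q t u (n + p) = gfun p q t u n + (p + q) := by
  unfold gfun
  have h : (n + p) * q + t = (n * q + t) + q * p := by ring
  rw [h, Int.add_mul_ediv_right _ _ (by omega : p ≠ 0)]
  ring

lemma gfun_add_mul (hp : 0 < p) (t u n : ℤ) (k : ℤ) :
    gfun p q t u (n + p * k) = gfun p q t u n + (p + q) * k := by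
  induction k using Int.induction_on with
  | zero => simp
  | succ m ih =>
      have e : n + p * ((m : ℤ) + 1) = (n + p * m) + p := by ring
      rw [e, gfun_add_p hp, ih]
      ring
  | pred m ih =>
      have e : n + p * (-(m : ℤ)) = (n + p * (-(m : ℤ) - 1)) + p := by ring
      rw [e, gfun_add_p hp] at ih
      have e2 : (p + q) * (-(m : ℤ) - 1) = (p + q) * (-(m : ℤ)) - (p + q) := by ring
      rw [e2]
      omega

lemma wfun_per (hp : 0 < p) (t u : ℤ) :
    ∀ i, wfun p q t u (i + (p + q)) = wfun p q t u i := by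
  intro i
  unfold wfun
  congr 1
  apply propext
  constructor
  · rintro ⟨n, hn⟩
    refine ⟨n - p, ?_⟩
    have := gfun_add_mul hp t u (n - p) (1 : ℤ) (q := q)
    simp only [mul_one] at this
    have e : n - p + p = n := by ring
    rw [e] at this
    omega
  · rintro ⟨n, hn⟩
    refine ⟨n + p, ?_⟩
    have := gfun_add_p hp t u n (q := q)
    omega

lemma gfun_mul_p (hp : 0 < p) (t u n : ℤ) :
    p * gfun p q t u n = n * (p + q) + t - (n * q + t) % p + p * u := by
  unfold gfun
  have h := Int.mul_ediv_add_emod (n * q + t) p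
  ring_nf
  nlinarith [h]

lemma gfun_inj_mod (hp : 0 < p) (hq : 0 < q) (hco : IsCoprime p q) (t u : ℤ)
    {n m : ℤ} (hn0 : 0 ≤ n) (hnp : n < p) (hm0 : 0 ≤ m) (hmp : m < p)
    (h : (p + q) ∣ (gfun p q t u n - gfun p q t u m)) : n = m := by
  set T : ℤ := p + q with hT
  have hdvd : T ∣ p * (gfun p q t u n - gfun p q t u m) := Dvd.dvd.mul_left h p
  have e : p * (gfun p q t u n - gfun p q t u m)
      = (n - m) * T + ((m * q + t) % p - (n * q + t) % p) := by
    have h1 := gfun_mul_p hp t u n (q := q)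
    have h2 := gfun_mul_p hp t u m (q := q)
    have : p * (gfun p q t u n - gfun p q t u m)
        = p * gfun p q t u n - p * gfun p q t u m := by ring
    rw [this, h1, h2]; ring
  rw [e] at hdvd
  have hdvd2 : T ∣ ((m * q + t) % p - (n * q + t) % p) := by
    have : (m * q + t) % p - (n * q + t) % p
        = ((n - m) * T + ((m * q + t) % p - (n * q + t) % p)) - (n - m) * T := by ring
    rw [this]
    exact dvd_sub hdvd (Dvd.dvd.mul_left dvd_rfl _)
  have hb1 : 0 ≤ (m * q + t) % p := Int.emod_nonneg _ (by omega)
  have hb2 : (m * q + t) % p < p := Int.emod_lt_of_pos _ hp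
  have hb3 : 0 ≤ (n * q + t) % p := Int.emod_nonneg _ (by omega)
  have hb4 : (n * q + t) % p < p := Int.emod_lt_of_pos _ hp
  have heq : (m * q + t) % p = (n * q + t) % p := by
    rcases hdvd2 with ⟨k, hk⟩
    have hk0 : k = 0 := by
      rcases lt_trichotomy k 0 with h' | h' | h'
      · nlinarith
      · exact h'
      · nlinarith
    subst hk0
    simp only [mul_zero] at hk
    omega
  have hpq : p ∣ (n - m) * q := by
    have h1 : (n * q + t) % p = (m * q + t) % p := heq.symm
    have h2 : ((n * q + t) - (m * q + t)) % p = 0 :=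
      (Int.emod_eq_emod_iff_emod_sub_eq_zero).1 h1
    have h3 : p ∣ (n * q + t) - (m * q + t) := Int.dvd_of_emod_eq_zero h2
    have e2 : (n * q + t) - (m * q + t) = (n - m) * q := by ring
    rwa [e2] at h3
  have hnm : p ∣ (n - m) := hco.dvd_of_dvd_mul_right hpq
  rcases hnm with ⟨k, hk⟩
  have hk0 : k = 0 := by
    rcases lt_trichotomy k 0 with h' | h' | h'
    · nlinarith
    · exact h'
    · nlinarith
  subst hk0
  simp only [mul_zero] at hk
  omega

lemma wfun_one_iff (p q t u : ℤ) (i : ℤ) :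
    wfun p q t u i = 1 ↔ ∃ n : ℤ, i = gfun p q t u n := by
  by_cases h : ∃ n : ℤ, i = gfun p q t u n
  · simp [wfun, h]
  · simp [wfun, h]

lemma wfun_least (hp : 0 < p) (hq : 0 < q) (hco : IsCoprime p q) (t u : ℤ) {s : ℤ}
    (h : ∀ i, wfun p q t u (i + s) = wfun p q t u i) : (p + q) ∣ s := by
  set T : ℤ := p + q with hT
  have hT0 : 0 < T := by omega
  have hiff : ∀ i : ℤ, (∃ n, i + s = gfun p q t u n) ↔ (∃ n, i = gfun p q t u n) := by
    intro i
    rw [← wfun_one_iff p q t u, ← wfun_one_iff p q t u, h i]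
  set Sfin : Finset ℤ := (Finset.Ico (0:ℤ) p).image (fun n => gfun p q t u n % T) with hSfin
  have hrange : ∀ v ∈ Sfin, 0 ≤ v ∧ v < T := by
    intro v hv
    rw [hSfin, Finset.mem_image] at hv
    obtain ⟨n, _, rfl⟩ := hv
    exact ⟨Int.emod_nonneg _ (by omega), Int.emod_lt_of_pos _ hT0⟩
  have hmem : ∀ i : ℤ, (∃ n, i = gfun p q t u n) ↔ i % T ∈ Sfin := by
    intro i
    constructor
    · rintro ⟨n, rfl⟩
      have hn : n = n % p + p * (n / p) := by
        have := Int.mul_ediv_add_emod n p; omega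
      rw [hSfin, Finset.mem_image]
      refine ⟨n % p, ?_, ?_⟩
      · rw [Finset.mem_Ico]
        exact ⟨Int.emod_nonneg _ (by omega), Int.emod_lt_of_pos _ hp⟩
      · have e : gfun p q t u n = gfun p q t u (n % p) + (p + q) * (n / p) := by
          have h2 := gfun_add_mul hp t u (n % p) (n / p) (q := q)
          rw [← hn] at h2
          exact h2
        rw [e, hT, Int.add_mul_emod_self_left]
    · intro hv
      rw [hSfin, Finset.mem_image] at hv
      obtain ⟨n, _, hn⟩ := hv
      have hdvd : T ∣ i - gfun p q t u n := by
        have h2 : (i - gfun p q t u n) % T = 0 :=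
          (Int.emod_eq_emod_iff_emod_sub_eq_zero).1 hn.symm
        exact Int.dvd_of_emod_eq_zero h2
      rcases hdvd with ⟨k, hk⟩
      refine ⟨n + p * k, ?_⟩
      rw [gfun_add_mul hp]
      have e : T * k = (p + q) * k := by rw [hT]
      omega
  have hinj : Set.InjOn (fun n => gfun p q t u n % T) (Finset.Ico (0:ℤ) p) := by
    intro n hn m hm hnm
    simp only [Finset.coe_Ico, Set.mem_Ico] at hn hm
    apply gfun_inj_mod hp hq hco t u hn.1 hn.2 hm.1 hm.2
    have h2 : (gfun p q t u n - gfun p q t u m) % T = 0 :=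
      (Int.emod_eq_emod_iff_emod_sub_eq_zero).1 hnm
    exact Int.dvd_of_emod_eq_zero h2
  have hcard : (Sfin.card : ℤ) = p := by
    rw [hSfin, Finset.card_image_of_injOn hinj, Int.card_Ico]
    simp [Int.toNat_of_nonneg (by omega : (0:ℤ) ≤ p)]
  -- the translation map on Sfin
  set ψ : ℤ → ℤ := fun v => (v + s) % T with hψ
  have hmaps : ∀ v ∈ Sfin, ψ v ∈ Sfin := by
    intro v hv
    have hv0 : 0 ≤ v ∧ v < T := hrange v hv
    have hvS : ∃ n, v = gfun p q t u n := by
      rw [hmem, Int.emod_eq_of_lt hv0.1 hv0.2]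
      exact hv
    have : ∃ n, v + s = gfun p q t u n := (hiff v).2 hvS
    rw [hmem] at this
    exact this
  have hinj2 : Set.InjOn ψ Sfin := by
    intro a ha b hb hab
    have ha' := hrange a ha
    have hb' := hrange b hb
    rw [hψ] at hab
    simp only at hab
    have h2 : ((a + s) - (b + s)) % T = 0 :=
      (Int.emod_eq_emod_iff_emod_sub_eq_zero).1 hab
    have h3 : T ∣ a - b := by
      have e : (a + s) - (b + s) = a - b := by ring
      rw [e] at h2
      exact Int.dvd_of_emod_eq_zero h2
    rcases h3 with ⟨k, hk⟩
    have hk0 : k = 0 := by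
      rcases lt_trichotomy k 0 with h' | h' | h'
      · nlinarith
      · exact h'
      · nlinarith
    subst hk0
    simp only [mul_zero] at hk
    omega
  have himg : Sfin.image ψ = Sfin := by
    apply Finset.eq_of_subset_of_card_le
    · intro v hv
      rw [Finset.mem_image] at hv
      obtain ⟨a, ha, rfl⟩ := hv
      exact hmaps a ha
    · rw [Finset.card_image_of_injOn hinj2]
  have hsum : ∑ v ∈ Sfin, ψ v = ∑ v ∈ Sfin, v := by
    conv_rhs => rw [← himg]
    rw [Finset.sum_image hinj2]
  have hsum2 : ∑ v ∈ Sfin, ψ v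
      = (∑ v ∈ Sfin, v) + (Sfin.card : ℤ) * s - T * ∑ v ∈ Sfin, ((v + s) / T) := by
    have hc : ∀ v ∈ Sfin, ψ v = (v + s) - T * ((v + s) / T) := by
      intro v _
      rw [hψ]
      simp only
      rw [Int.emod_def]
    rw [Finset.sum_congr rfl hc, Finset.sum_sub_distrib, Finset.sum_add_distrib,
      Finset.sum_const, nsmul_eq_mul, ← Finset.mul_sum]
  have hfinal : (p : ℤ) * s = T * ∑ v ∈ Sfin, ((v + s) / T) := by
    rw [hsum2] at hsum
    rw [← hcard]
    omega
  have hdvdps : T ∣ p * s := ⟨_, hfinal⟩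
  have hcop : IsCoprime T p := by
    have h1 : IsCoprime q p := hco.symm
    have h2 := h1.add_mul_left_left (1 : ℤ)
    have e : q + p * 1 = T := by rw [hT]; ring
    rwa [e] at h2
  exact hcop.dvd_of_dvd_mul_left hdvdps

end Comb

section CellComp

variable {p q : ℤ}

lemma rat_lt_iff (hq : 0 < q) (a k : ℤ) :
    ((a : ℚ) < (k : ℚ) * ((p : ℚ) / (q : ℚ))) ↔ a * q < k * p := by
  have hq' : (0 : ℚ) < (q : ℚ) := by exact_mod_cast hq
  rw [mul_div_assoc', lt_div_iff₀ hq']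
  constructor
  · intro h; exact_mod_cast h
  · intro h; exact_mod_cast h

lemma rat_le_iff (hq : 0 < q) (a k : ℤ) :
    ((k : ℚ) * ((p : ℚ) / (q : ℚ)) ≤ (a : ℚ)) ↔ k * p ≤ a * q := by
  have hq' : (0 : ℚ) < (q : ℚ) := by exact_mod_cast hq
  rw [mul_div_assoc', div_le_iff₀ hq']
  constructor
  · intro h; exact_mod_cast h
  · intro h; exact_mod_cast h

lemma rat_le_iff' (hq : 0 < q) (a k : ℤ) :
    ((a : ℚ) ≤ (k : ℚ) * ((p : ℚ) / (q : ℚ))) ↔ a * q ≤ k * p := by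
  have hq' : (0 : ℚ) < (q : ℚ) := by exact_mod_cast hq
  rw [mul_div_assoc', le_div_iff₀ hq']
  constructor
  · intro h; exact_mod_cast h
  · intro h; exact_mod_cast h

lemma rat_lt_iff' (hq : 0 < q) (a k : ℤ) :
    ((k : ℚ) * ((p : ℚ) / (q : ℚ)) < (a : ℚ)) ↔ k * p < a * q := by
  have hq' : (0 : ℚ) < (q : ℚ) := by exact_mod_cast hq
  rw [mul_div_assoc', div_lt_iff₀ hq']
  constructor
  · intro h; exact_mod_cast h
  · intro h; exact_mod_cast h

lemma ncard_strip (hp : 0 < p) (A B : ℤ) :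
    ({k : ℤ | A < k * p ∧ k * p ≤ B}).ncard = (B / p - A / p).toNat := by
  have hset : {k : ℤ | A < k * p ∧ k * p ≤ B} = ↑(Finset.Ioc (A / p) (B / p)) := by
    ext k
    simp only [Set.mem_setOf_eq, Finset.coe_Ioc, Set.mem_Ioc]
    rw [Int.ediv_lt_iff_lt_mul hp, Int.le_ediv_iff_mul_le hp]
  rw [hset, Set.ncard_coe_finset, Int.card_Ioc]

lemma ediv_mono_q (hp : 0 < p) (hq : 0 < q) {a b : ℤ} (h : a ≤ b) :
    a * q / p ≤ b * q / p :=
  Int.ediv_le_ediv hp (by nlinarith)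

lemma cellLenS_neg (hp : 0 < p) (hq : 0 < q) {n : ℤ} (hn : n < 0) :
    (cellLenS p q n : ℤ) = (n + 1) * q / p - n * q / p := by
  rw [cellLenS, if_pos hn]
  have hset : {k : ℤ | (n : ℚ) < (k : ℚ) * ((p : ℚ) / (q : ℚ)) ∧
      (k : ℚ) * ((p : ℚ) / (q : ℚ)) ≤ (n : ℚ) + 1}
      = {k : ℤ | n * q < k * p ∧ k * p ≤ (n + 1) * q} := by
    ext k
    rw [Set.mem_setOf_eq, Set.mem_setOf_eq, rat_lt_iff hq]
    have : ((n : ℚ) + 1) = (((n + 1 : ℤ)) : ℚ) := by push_cast; ring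
    rw [this, rat_le_iff hq]
  rw [hset, ncard_strip hp]
  rw [Int.toNat_of_nonneg (by have := ediv_mono_q hp hq (show n ≤ n + 1 by omega); omega)]

lemma cellLenS_zero (hp : 0 < p) (hq : 0 < q) :
    (cellLenS p q 0 : ℤ) = (q - 1) / p := by
  rw [cellLenS, if_neg (by omega), if_pos rfl]
  have hset : {k : ℤ | 0 < (k : ℚ) * ((p : ℚ) / (q : ℚ)) ∧
      (k : ℚ) * ((p : ℚ) / (q : ℚ)) < 1}
      = {k : ℤ | 0 < k * p ∧ k * p ≤ q - 1} := by
    ext k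
    rw [Set.mem_setOf_eq, Set.mem_setOf_eq]
    have h0 : ((0 : ℤ) : ℚ) = 0 := by norm_num
    have h1 : ((1 : ℤ) : ℚ) = 1 := by norm_num
    rw [← h0, ← h1, rat_lt_iff hq, rat_lt_iff' hq]
    constructor
    · rintro ⟨ha, hb⟩; exact ⟨by omega, by omega⟩
    · rintro ⟨ha, hb⟩; exact ⟨by omega, by omega⟩
  rw [hset, ncard_strip hp]
  rw [Int.zero_ediv, Int.toNat_of_nonneg (by
    have : (0:ℤ) ≤ q - 1 := by omega
    have := Int.ediv_nonneg this (by omega : (0:ℤ) ≤ p)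
    omega)]
  omega

lemma cellLenS_pos (hp : 0 < p) (hq : 0 < q) {n : ℤ} (hn : 0 < n) :
    (cellLenS p q n : ℤ) = ((n + 1) * q - 1) / p - (n * q - 1) / p := by
  rw [cellLenS, if_neg (by omega), if_neg (by omega)]
  have hset : {k : ℤ | (n : ℚ) ≤ (k : ℚ) * ((p : ℚ) / (q : ℚ)) ∧
      (k : ℚ) * ((p : ℚ) / (q : ℚ)) < (n : ℚ) + 1}
      = {k : ℤ | n * q - 1 < k * p ∧ k * p ≤ (n + 1) * q - 1} := by
    ext k
    rw [Set.mem_setOf_eq, Set.mem_setOf_eq, rat_le_iff' hq]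
    have : ((n : ℚ) + 1) = (((n + 1 : ℤ)) : ℚ) := by push_cast; ring
    rw [this, rat_lt_iff' hq]
    constructor
    · rintro ⟨ha, hb⟩; exact ⟨by omega, by omega⟩
    · rintro ⟨ha, hb⟩; exact ⟨by omega, by omega⟩
  rw [hset, ncard_strip hp]
  rw [Int.toNat_of_nonneg (by
    have := Int.ediv_le_ediv hp (show n * q - 1 ≤ (n+1) * q - 1 by nlinarith)
    omega)]

lemma cellLenS'_neg (hp : 0 < p) (hq : 0 < q) {n : ℤ} (hn : n < 0) :
    (cellLenS' p q n : ℤ) = ((n + 1) * q - 1) / p - (n * q - 1) / p := by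
  rw [cellLenS', if_pos hn]
  have hset : {k : ℤ | (n : ℚ) ≤ (k : ℚ) * ((p : ℚ) / (q : ℚ)) ∧
      (k : ℚ) * ((p : ℚ) / (q : ℚ)) < (n : ℚ) + 1}
      = {k : ℤ | n * q - 1 < k * p ∧ k * p ≤ (n + 1) * q - 1} := by
    ext k
    rw [Set.mem_setOf_eq, Set.mem_setOf_eq, rat_le_iff' hq]
    have : ((n : ℚ) + 1) = (((n + 1 : ℤ)) : ℚ) := by push_cast; ring
    rw [this, rat_lt_iff' hq]
    constructor
    · rintro ⟨ha, hb⟩; exact ⟨by omega, by omega⟩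
    · rintro ⟨ha, hb⟩; exact ⟨by omega, by omega⟩
  rw [hset, ncard_strip hp]
  rw [Int.toNat_of_nonneg (by
    have := Int.ediv_le_ediv hp (show n * q - 1 ≤ (n+1) * q - 1 by nlinarith)
    omega)]

lemma neg_one_ediv (hp : 0 < p) : (-1 : ℤ) / p = -1 := by
  have h1 : (-1 : ℤ) / p < 0 := Int.ediv_neg_of_neg_of_pos (by omega) hp
  have h2 : (-p : ℤ) / p ≤ (-1 : ℤ) / p := Int.ediv_le_ediv hp (by omega)
  have h3 : (-p : ℤ) / p = -1 := by
    rw [show (-p : ℤ) = (-1) * p by ring, Int.mul_ediv_cancel _ (by omega)]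
  omega

lemma cellLenS'_zero (hp : 0 < p) (hq : 0 < q) :
    (cellLenS' p q 0 : ℤ) = q / p + 1 := by
  rw [cellLenS', if_neg (by omega), if_pos rfl]
  have hset : {k : ℤ | 0 ≤ (k : ℚ) * ((p : ℚ) / (q : ℚ)) ∧
      (k : ℚ) * ((p : ℚ) / (q : ℚ)) ≤ 1}
      = {k : ℤ | -1 < k * p ∧ k * p ≤ q} := by
    ext k
    rw [Set.mem_setOf_eq, Set.mem_setOf_eq]
    have h0 : ((0 : ℤ) : ℚ) = 0 := by norm_num
    have h1 : ((1 : ℤ) : ℚ) = 1 := by norm_num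
    rw [← h0, ← h1, rat_le_iff' hq, rat_le_iff hq]
    constructor
    · rintro ⟨ha, hb⟩; exact ⟨by omega, by omega⟩
    · rintro ⟨ha, hb⟩; exact ⟨by omega, by omega⟩
  rw [hset, ncard_strip hp, neg_one_ediv hp]
  rw [Int.toNat_of_nonneg (by
    have := Int.ediv_nonneg (show (0:ℤ) ≤ q by omega) (show (0:ℤ) ≤ p by omega)
    omega)]
  omega

lemma cellLenS'_pos (hp : 0 < p) (hq : 0 < q) {n : ℤ} (hn : 0 < n) :
    (cellLenS' p q n : ℤ) = (n + 1) * q / p - n * q / p := by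
  rw [cellLenS', if_neg (by omega), if_neg (by omega)]
  have hset : {k : ℤ | (n : ℚ) < (k : ℚ) * ((p : ℚ) / (q : ℚ)) ∧
      (k : ℚ) * ((p : ℚ) / (q : ℚ)) ≤ (n : ℚ) + 1}
      = {k : ℤ | n * q < k * p ∧ k * p ≤ (n + 1) * q} := by
    ext k
    rw [Set.mem_setOf_eq, Set.mem_setOf_eq, rat_lt_iff hq]
    have : ((n : ℚ) + 1) = (((n + 1 : ℤ)) : ℚ) := by push_cast; ring
    rw [this, rat_le_iff hq]
  rw [hset, ncard_strip hp]
  rw [Int.toNat_of_nonneg (by have := ediv_mono_q hp hq (show n ≤ n + 1 by omega); omega)]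

end CellComp

section CellStart

variable {p q : ℤ}

lemma Ico_singleton_sum (f : ℤ → ℤ) (a : ℤ) : ∑ j ∈ Finset.Ico a (a + 1), f j = f a := by
  have : Finset.Ico a (a + 1) = {a} := by
    ext j
    simp only [Finset.mem_Ico, Finset.mem_singleton]
    omega
  rw [this, Finset.sum_singleton]

lemma sum_Ico_split (f : ℤ → ℤ) {a b c : ℤ} (h1 : a ≤ b) (h2 : b ≤ c) :
    ∑ j ∈ Finset.Ico a c, f j = ∑ j ∈ Finset.Ico a b, f j + ∑ j ∈ Finset.Ico b c, f j := by
  rw [← Finset.sum_union (Finset.Ico_disjoint_Ico_consecutive a b c),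
    Finset.Ico_union_Ico_eq_Ico h1 h2]

lemma Ico_zero_one_sum (f : ℤ → ℤ) : ∑ j ∈ Finset.Ico (0:ℤ) 1, f j = f 0 := by
  have h := Ico_singleton_sum f 0
  rwa [zero_add] at h

lemma sumS_pos (hp : 0 < p) (hq : 0 < q) :
    ∀ n : ℤ, 1 ≤ n → (∑ j ∈ Finset.Ico (0 : ℤ) n, (cellLenS p q j : ℤ)) = (n * q - 1) / p := by
  refine Int.le_induction ?_ ?_
  · rw [Ico_zero_one_sum (fun j => (cellLenS p q j : ℤ)), cellLenS_zero hp hq]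
    norm_num
  · intro n hn ih
    have hsplit := sum_Ico_split (fun j => (cellLenS p q j : ℤ))
      (show (0:ℤ) ≤ n by omega) (show n ≤ n + 1 by omega)
    rw [hsplit, Ico_singleton_sum (fun j => (cellLenS p q j : ℤ)) n, ih,
      cellLenS_pos hp hq (by omega : (0:ℤ) < n)]
    ring
lemma sumS_neg (hp : 0 < p) (hq : 0 < q) :
    ∀ m : ℕ, (∑ j ∈ Finset.Ico (-(m:ℤ)) (0 : ℤ), (cellLenS p q j : ℤ)) = -((-(m:ℤ)) * q / p) := by
  intro m
  induction m with
  | zero => simp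
  | succ m ih =>
      have e0 : (-((m+1 : ℕ) : ℤ)) = -(m:ℤ) - 1 := by push_cast; ring
      rw [e0]
      have hsplit := sum_Ico_split (fun j => (cellLenS p q j : ℤ))
        (show -(m:ℤ) - 1 ≤ -(m:ℤ) by omega) (show -(m:ℤ) ≤ 0 by omega)
      rw [hsplit]
      have hsing : ∑ j ∈ Finset.Ico (-(m:ℤ) - 1) (-(m:ℤ)), (cellLenS p q j : ℤ)
          = (cellLenS p q (-(m:ℤ) - 1) : ℤ) := by
        have h := Ico_singleton_sum (fun j => (cellLenS p q j : ℤ)) (-(m:ℤ) - 1)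
        rw [show -(m:ℤ) - 1 + 1 = -(m:ℤ) by ring] at h
        exact h
      rw [hsing, ih, cellLenS_neg hp hq (show -(m:ℤ) - 1 < 0 by omega)]
      rw [show -(m:ℤ) - 1 + 1 = -(m:ℤ) by ring]
      omega

lemma cellStart_S (hp : 0 < p) (hq : 0 < q) (n : ℤ) :
    cellStart (cellLenS p q) n = if n ≤ 0 then gfun p q 0 0 n else gfun p q (-1) 0 n := by
  rcases lt_trichotomy n 0 with hn | hn | hn
  · rw [cellStart, if_neg (by omega), if_pos (by omega)]
    have hm : n = -(((-n).toNat : ℤ)) := by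
      have := Int.toNat_of_nonneg (show (0:ℤ) ≤ -n by omega); omega
    rw [hm, sumS_neg hp hq]
    simp only [gfun, add_zero, zero_add, sub_eq_add_neg]
    try omega
  · subst hn
    rw [cellStart, if_pos le_rfl, if_pos le_rfl]
    simp [gfun]
  · rw [cellStart, if_pos (by omega), if_neg (by omega)]
    rw [sumS_pos hp hq n (by omega)]
    simp only [gfun, add_zero, zero_add, sub_eq_add_neg]
    try omega

lemma sumS'_pos (hp : 0 < p) (hq : 0 < q) :
    ∀ n : ℤ, 1 ≤ n → (∑ j ∈ Finset.Ico (0 : ℤ) n, (cellLenS' p q j : ℤ)) = n * q / p + 1 := by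
  refine Int.le_induction ?_ ?_
  · rw [Ico_zero_one_sum (fun j => (cellLenS' p q j : ℤ)), cellLenS'_zero hp hq]
    norm_num
  · intro n hn ih
    have hsplit := sum_Ico_split (fun j => (cellLenS' p q j : ℤ))
      (show (0:ℤ) ≤ n by omega) (show n ≤ n + 1 by omega)
    rw [hsplit, Ico_singleton_sum (fun j => (cellLenS' p q j : ℤ)) n, ih,
      cellLenS'_pos hp hq (by omega : (0:ℤ) < n)]
    ring
lemma sumS'_neg (hp : 0 < p) (hq : 0 < q) :
    ∀ m : ℕ, (∑ j ∈ Finset.Ico (-(m:ℤ)) (0 : ℤ), (cellLenS' p q j : ℤ))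
      = -1 - ((-(m:ℤ)) * q - 1) / p := by
  intro m
  induction m with
  | zero => simp [neg_one_ediv hp]
  | succ m ih =>
      have e0 : (-((m+1 : ℕ) : ℤ)) = -(m:ℤ) - 1 := by push_cast; ring
      rw [e0]
      have hsplit := sum_Ico_split (fun j => (cellLenS' p q j : ℤ))
        (show -(m:ℤ) - 1 ≤ -(m:ℤ) by omega) (show -(m:ℤ) ≤ 0 by omega)
      rw [hsplit]
      have hsing : ∑ j ∈ Finset.Ico (-(m:ℤ) - 1) (-(m:ℤ)), (cellLenS' p q j : ℤ)
          = (cellLenS' p q (-(m:ℤ) - 1) : ℤ) := by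
        have h := Ico_singleton_sum (fun j => (cellLenS' p q j : ℤ)) (-(m:ℤ) - 1)
        rw [show -(m:ℤ) - 1 + 1 = -(m:ℤ) by ring] at h
        exact h
      rw [hsing, ih, cellLenS'_neg hp hq (show -(m:ℤ) - 1 < 0 by omega)]
      rw [show -(m:ℤ) - 1 + 1 = -(m:ℤ) by ring]
      omega

lemma cellStart_S' (hp : 0 < p) (hq : 0 < q) (n : ℤ) :
    cellStart (cellLenS' p q) n = if n ≤ 0 then gfun p q (-1) 1 n else gfun p q 0 1 n := by
  rcases lt_trichotomy n 0 with hn | hn | hn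
  · rw [cellStart, if_neg (by omega), if_pos (by omega)]
    have hm : n = -(((-n).toNat : ℤ)) := by
      have := Int.toNat_of_nonneg (show (0:ℤ) ≤ -n by omega); omega
    rw [hm, sumS'_neg hp hq]
    simp only [gfun, add_zero, zero_add, sub_eq_add_neg]
    try omega
  · subst hn
    rw [cellStart, if_pos le_rfl, if_pos le_rfl]
    simp [gfun, neg_one_ediv hp]
  · rw [cellStart, if_pos (by omega), if_neg (by omega)]
    rw [sumS'_pos hp hq n (by omega)]
    simp only [gfun, add_zero, zero_add, sub_eq_add_neg]
    try omega

end CellStart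

section Tails

variable {p q : ℤ}

lemma ediv_le_zero (hp : 0 < p) {a : ℤ} (ha : a ≤ 0) : a / p ≤ 0 := by
  have h := Int.ediv_le_ediv hp ha
  rwa [Int.zero_ediv] at h

lemma ediv_le_neg_one (hp : 0 < p) {a : ℤ} (ha : a < 0) : a / p ≤ -1 := by
  have := Int.ediv_neg_of_neg_of_pos ha hp; omega

lemma ediv_ge_zero (hp : 0 < p) {a : ℤ} (ha : 0 ≤ a) : 0 ≤ a / p :=
  Int.ediv_nonneg ha (by omega)

lemma gfun_translate (hp : 0 < p) {t t' u u' d e : ℤ} (hde : d * q = t - t' + e * p) (n : ℤ) :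
    gfun p q t' u' (n + d) = gfun p q t u n + (d + e + u' - u) := by
  unfold gfun
  have h : (n + d) * q + t' = (n * q + t) + e * p := by linear_combination hde
  rw [h, Int.add_mul_ediv_right _ _ (by omega : p ≠ 0)]
  ring

lemma sturmS_right (hp : 0 < p) (hq : 0 < q) {i : ℤ} (hi : 1 ≤ i) :
    sturmS p q i = wfun p q (-1) 0 i := by
  unfold sturmS seqOfCells wfun
  congr 1
  apply propext
  constructor
  · rintro ⟨n, hn⟩
    rw [cellStart_S hp hq n] at hn
    by_cases h : n ≤ 0
    · rw [if_pos h] at hn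
      exfalso
      have h1 : gfun p q 0 0 n ≤ 0 := by
        have := ediv_le_zero hp (show n * q + 0 ≤ 0 by nlinarith)
        unfold gfun; omega
      omega
    · rw [if_neg h] at hn
      exact ⟨n, hn⟩
  · rintro ⟨n, hn⟩
    by_cases h : n ≤ 0
    · exfalso
      have h1 : gfun p q (-1) 0 n ≤ -1 := by
        have := ediv_le_neg_one hp (show n * q + -1 < 0 by nlinarith)
        unfold gfun; omega
      omega
    · exact ⟨n, by rw [cellStart_S hp hq n, if_neg h]; exact hn⟩

lemma sturmS_left (hp : 0 < p) (hq : 0 < q) {d e : ℤ} (hde : d * q = 1 + e * p)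
    {i : ℤ} (hi : i ≤ 0) :
    sturmS p q i = wfun p q (-1) 0 (i + (d + e)) := by
  have hde' : d * q = 0 - (-1) + e * p := by omega
  unfold sturmS seqOfCells wfun
  congr 1
  apply propext
  constructor
  · rintro ⟨n, hn⟩
    rw [cellStart_S hp hq n] at hn
    by_cases h : n ≤ 0
    · rw [if_pos h] at hn
      refine ⟨n + d, ?_⟩
      have := gfun_translate hp (t := 0) (u := 0) (t' := -1) (u' := 0) hde' n
      omega
    · exfalso
      rw [if_neg h] at hn
      have h1 : 1 ≤ gfun p q (-1) 0 n := by
        have := ediv_ge_zero hp (show 0 ≤ n * q + -1 by nlinarith)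
        unfold gfun; omega
      omega
  · rintro ⟨m, hm⟩
    have h2 : gfun p q (-1) 0 ((m - d) + d) = gfun p q 0 0 (m - d) + (d + e + 0 - 0) :=
      gfun_translate hp (t := 0) (u := 0) (t' := -1) (u' := 0) hde' (m - d)
    have h3 : i = gfun p q 0 0 (m - d) := by
      have e1 : m - d + d = m := by ring
      rw [e1] at h2
      omega
    have h4 : m - d ≤ 0 := by
      by_contra hcon
      have h5 : 1 ≤ gfun p q 0 0 (m - d) := by
        have := ediv_ge_zero hp (show 0 ≤ (m - d) * q + 0 by nlinarith)
        unfold gfun; omega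
      omega
    exact ⟨m - d, by rw [cellStart_S hp hq (m - d), if_pos h4]; exact h3⟩

lemma sturmS'_right (hp : 0 < p) (hq : 0 < q) {i : ℤ} (hi : 2 ≤ i) :
    sturmS' p q i = wfun p q 0 1 i := by
  unfold sturmS' seqOfCells wfun
  congr 1
  apply propext
  constructor
  · rintro ⟨n, hn⟩
    rw [cellStart_S' hp hq n] at hn
    by_cases h : n ≤ 0
    · rw [if_pos h] at hn
      exfalso
      have h1 : gfun p q (-1) 1 n ≤ 0 := by
        have := ediv_le_neg_one hp (show n * q + -1 < 0 by nlinarith)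
        unfold gfun; omega
      omega
    · rw [if_neg h] at hn
      exact ⟨n, hn⟩
  · rintro ⟨n, hn⟩
    by_cases h : n ≤ 0
    · exfalso
      have h1 : gfun p q 0 1 n ≤ 1 := by
        have := ediv_le_zero hp (show n * q + 0 ≤ 0 by nlinarith)
        unfold gfun; omega
      omega
    · exact ⟨n, by rw [cellStart_S' hp hq n, if_neg h]; exact hn⟩

lemma sturmS'_left (hp : 0 < p) (hq : 0 < q) {d e : ℤ} (hde : d * q = -1 + e * p)
    {i : ℤ} (hi : i ≤ 0) :
    sturmS' p q i = wfun p q 0 1 (i + (d + e)) := by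
  have hde' : d * q = -1 - 0 + e * p := by omega
  unfold sturmS' seqOfCells wfun
  congr 1
  apply propext
  constructor
  · rintro ⟨n, hn⟩
    rw [cellStart_S' hp hq n] at hn
    by_cases h : n ≤ 0
    · rw [if_pos h] at hn
      refine ⟨n + d, ?_⟩
      have := gfun_translate hp (t := -1) (u := 1) (t' := 0) (u' := 1) hde' n
      omega
    · exfalso
      rw [if_neg h] at hn
      have h1 : 2 ≤ gfun p q 0 1 n := by
        have := ediv_ge_zero hp (show 0 ≤ n * q + 0 by nlinarith)
        unfold gfun; omega
      omega
  · rintro ⟨m, hm⟩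
    have h2 := gfun_translate hp (t := -1) (u := 1) (t' := 0) (u' := 1) hde' (m - d)
    have h3 : i = gfun p q (-1) 1 (m - d) := by
      have e1 : m - d + d = m := by ring
      rw [e1] at h2
      omega
    have h4 : m - d ≤ 0 := by
      by_contra hcon
      have h5 : 2 ≤ gfun p q (-1) 1 (m - d) := by
        have := ediv_ge_zero hp (show 0 ≤ (m - d) * q + -1 by nlinarith)
        unfold gfun; omega
      omega
    exact ⟨m - d, by rw [cellStart_S' hp hq (m - d), if_pos h4]; exact h3⟩

lemma tailData_S (hp : 0 < p) (hq : 0 < q) (hco : IsCoprime p q)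
    {d e : ℤ} (hde : d * q = 1 + e * p) :
    TailData (sturmS p q) (wfun p q (-1) 0) (p + q) (d + e) 1 0 where
  hT := by omega
  per := wfun_per hp (-1) 0
  least := fun s h => wfun_least hp hq hco (-1) 0 h
  right := fun i hi => sturmS_right hp hq hi
  left := fun i hi => sturmS_left hp hq hde hi
  hRL := by omega
  hc := by
    rintro ⟨k, hk⟩
    have h1 : (p + q) ∣ 1 := ⟨q * k - e, by linear_combination q * hk - hde⟩
    have := Int.le_of_dvd (by omega) h1
    omega

lemma tailData_S' (hp : 0 < p) (hq : 0 < q) (hco : IsCoprime p q)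
    {d e : ℤ} (hde : d * q = -1 + e * p) :
    TailData (sturmS' p q) (wfun p q 0 1) (p + q) (d + e) 2 0 where
  hT := by omega
  per := wfun_per hp 0 1
  least := fun s h => wfun_least hp hq hco 0 1 h
  right := fun i hi => sturmS'_right hp hq hi
  left := fun i hi => sturmS'_left hp hq hde hi
  hRL := by omega
  hc := by
    rintro ⟨k, hk⟩
    have h1 : (p + q) ∣ 1 := ⟨e - q * k, by linear_combination hde - q * hk⟩
    have := Int.le_of_dvd (by omega) h1
    omega

end Tails

lemma final_arith {p q p' q' cc cc' e e' ε : ℤ} (hp : 0 < p) (hq : 0 < q)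
    (hp' : 0 < p') (hq' : 0 < q') (hε : ε = 1 ∨ ε = -1)
    (hc : q * cc = ε + e * (p + q)) (hc' : q' * cc' = ε + e' * (p' + q'))
    (hTeq : p + q = p' + q') (hdvd : (p + q) ∣ (cc - cc')) :
    p = p' ∧ q = q' := by
  obtain ⟨m, hm⟩ := hdvd
  have hc'2 : q' * cc' = ε + e' * (p + q) := by rw [hTeq]; exact hc'
  have key : ε * (q' - q) = (p + q) * (q * q' * m - q' * e + q * e') := by
    linear_combination q * hc'2 - q' * hc + q * q' * hm
  have hq1 : q < p + q := by omega
  have hq2 : q' < p' + q' := by omega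
  have hqq' : q = q' := by
    rcases hε with rfl | rfl
    · rcases lt_trichotomy (q * q' * m - q' * e + q * e') 0 with h | h | h
      · nlinarith
      · rw [h, mul_zero] at key; omega
      · nlinarith
    · rcases lt_trichotomy (q * q' * m - q' * e + q * e') 0 with h | h | h
      · nlinarith
      · rw [h, mul_zero] at key; omega
      · nlinarith
  constructor
  · omega
  · exact hqq'


/-- For distinct pairs `(p,q) ≠ (p′,q′)` of coprime positive integers, the
subshifts generated by same-type skew Sturmian sequences of frequencies `q/p` and
`q′/p′` are not conjugate. -/
theorem stmt_16 (p q p' q' : ℤ) (hp : 0 < p) (hq : 0 < q) (hpq : IsCoprime p q)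
    (hp' : 0 < p') (hq' : 0 < q') (hpq' : IsCoprime p' q')
    (hne : (p, q) ≠ (p', q')) :
    ¬ Conjugate (subshiftGen (sturmS p q)) (subshiftGen (sturmS p' q')) ∧
      ¬ Conjugate (subshiftGen (sturmS' p q)) (subshiftGen (sturmS' p' q')) := by
  obtain ⟨a, b, hab⟩ := hpq
  obtain ⟨a', b', hab'⟩ := hpq'
  have hde : b * q = 1 + (-a) * p := by linear_combination hab
  have hde' : b' * q' = 1 + (-a') * p' := by linear_combination hab'
  have hde2 : (-b) * q = -1 + a * p := by linear_combination -hab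
  have hde2' : (-b') * q' = -1 + a' * p' := by linear_combination -hab'
  constructor
  · intro hconj
    have D := tailData_S hp hq ⟨a, b, hab⟩ hde
    have D' := tailData_S hp' hq' ⟨a', b', hab'⟩ hde'
    obtain ⟨hTeq, hdvd⟩ := conj_invariant D D' hconj
    have hc : q * (b + -a) = 1 + (-a) * (p + q) := by linear_combination hab
    have hc' : q' * (b' + -a') = 1 + (-a') * (p' + q') := by linear_combination hab'
    obtain ⟨h1, h2⟩ := final_arith hp hq hp' hq' (Or.inl rfl) hc hc' hTeq hdvd
    exact hne (by rw [h1, h2])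
  · intro hconj
    have D := tailData_S' hp hq ⟨a, b, hab⟩ hde2
    have D' := tailData_S' hp' hq' ⟨a', b', hab'⟩ hde2'
    obtain ⟨hTeq, hdvd⟩ := conj_invariant D D' hconj
    have hc : q * (-b + a) = -1 + a * (p + q) := by linear_combination -hab
    have hc' : q' * (-b' + a') = -1 + a' * (p' + q') := by linear_combination -hab'
    obtain ⟨h1, h2⟩ := final_arith hp hq hp' hq' (Or.inr rfl) hc hc' hTeq hdvd
    exact hne (by rw [h1, h2])
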